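/- Let A be a finite nonempty set of acts and let S ⊆ A be a nonempty subset with |S| = k and S ≠ A. Then there exists a subset T ⊆ A with |T| = k such that T ∩ D_M(A) ≠ ∅ and MmL(T,A) ≤ MmL(S,A). -/
import Mathlib


open Finset

/-- Upper expectation of `f` with respect to the set `P` of probability mass functions:
`Ē(f) = sup_{p ∈ P} ∑ ω, p ω * f ω` (the sup is attained when `P` is nonempty and compact). -/
noncomputable def upperExp {Ω : Type*} [Fintype Ω] (P : Set (Ω → ℝ)) (f : Ω → ℝ) : ℝ :=
  sSup ((fun p => ∑ ω, p ω * f ω) '' P)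

/-- `P` is a credal set: a nonempty compact set of probability mass functions on `Ω`. -/
def IsCredal {Ω : Type*} [Fintype Ω] (P : Set (Ω → ℝ)) : Prop :=
  P.Nonempty ∧ IsCompact P ∧ ∀ p ∈ P, (∀ ω, 0 ≤ p ω) ∧ ∑ ω, p ω = 1

/-- `a ≻ a'`: act `a` dominates act `a'`, i.e. `Ē(a' − a) < 0` (equivalently `E̲(a − a') > 0`). -/
def dominates {Ω : Type*} [Fintype Ω] (P : Set (Ω → ℝ)) (a a' : Ω → ℝ) : Prop :=
  upperExp P (a' - a) < 0

/-- `a` is a maximal act of `A`: `a ∈ A` and no `a' ∈ A` dominates `a`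
(membership in `D_M(A)`). -/
def maximalIn {Ω : Type*} [Fintype Ω] (P : Set (Ω → ℝ)) (A : Finset (Ω → ℝ))
    (a : Ω → ℝ) : Prop :=
  a ∈ A ∧ ∀ a' ∈ A, ¬ dominates P a' a

/-- `mML(S, A) = min_{a ∈ S} max_{a' ∈ A ∖ S} Ē(a' − a)`, valued in `EReal` so that the
maximum over the empty set is `−∞` (hence `mML(A, A) = −∞` when `S` is nonempty). -/
noncomputable def mML {Ω : Type*} [Fintype Ω] [DecidableEq (Ω → ℝ)]
    (P : Set (Ω → ℝ)) (S A : Finset (Ω → ℝ)) : EReal :=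
  S.inf fun a => (A \ S).sup fun a' => ((upperExp P (a' - a) : ℝ) : EReal)

/-- `MmL(S, A) = max_{a' ∈ A ∖ S} min_{a ∈ S} Ē(a' − a)`, valued in `EReal` so that the
maximum over the empty set is `−∞` (hence `MmL(A, A) = −∞`). -/
noncomputable def MmL {Ω : Type*} [Fintype Ω] [DecidableEq (Ω → ℝ)]
    (P : Set (Ω → ℝ)) (S A : Finset (Ω → ℝ)) : EReal :=
  (A \ S).sup fun a' => S.inf fun a => ((upperExp P (a' - a) : ℝ) : EReal)

section Aux
open Finset
variable {Ω : Type*} [Fintype Ω]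

lemma bddAbove_upImage (P : Set (Ω → ℝ)) (hc : IsCompact P) (f : Ω → ℝ) :
    BddAbove ((fun p => ∑ ω, p ω * f ω) '' P) := by
  have hcont : Continuous (fun p : Ω → ℝ => ∑ ω, p ω * f ω) :=
    continuous_finset_sum _ fun ω _ => (continuous_apply ω).mul continuous_const
  exact (hc.image hcont).bddAbove

lemma le_upperExp {P : Set (Ω → ℝ)} (hc : IsCompact P) {p : Ω → ℝ} (hp : p ∈ P)
    (f : Ω → ℝ) : ∑ ω, p ω * f ω ≤ upperExp P f :=
  le_csSup (bddAbove_upImage P hc f) ⟨p, hp, rfl⟩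

lemma upperExp_zero {P : Set (Ω → ℝ)} (hP : IsCredal P) : upperExp P (0 : Ω → ℝ) = 0 := by
  obtain ⟨⟨p, hp⟩, hc, -⟩ := hP
  apply le_antisymm
  · apply csSup_le (Set.Nonempty.image _ ⟨p, hp⟩)
    rintro x ⟨q, hq, rfl⟩
    simp
  · have h := le_upperExp hc hp (0 : Ω → ℝ)
    simpa using h

lemma upperExp_sub_add {P : Set (Ω → ℝ)} (hP : IsCredal P) (a b c : Ω → ℝ) :
    upperExp P (a - c) ≤ upperExp P (a - b) + upperExp P (b - c) := by
  obtain ⟨hne, hc, -⟩ := hP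
  apply csSup_le (Set.Nonempty.image _ hne)
  rintro x ⟨p, hp, rfl⟩
  show ∑ ω, p ω * (a - c) ω ≤ _
  have hsplit : ∑ ω, p ω * (a - c) ω = (∑ ω, p ω * (a - b) ω) + ∑ ω, p ω * (b - c) ω := by
    rw [← Finset.sum_add_distrib]
    exact Finset.sum_congr rfl fun ω _ => by simp [Pi.sub_apply]; ring
  rw [hsplit]
  exact add_le_add (le_upperExp hc hp _) (le_upperExp hc hp _)

lemma dominates_trans {P : Set (Ω → ℝ)} (hP : IsCredal P) {a b c : Ω → ℝ}
    (h1 : dominates P a b) (h2 : dominates P b c) : dominates P a c := by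
  have := upperExp_sub_add hP c b a
  unfold dominates at *
  linarith

lemma dominates_irrefl {P : Set (Ω → ℝ)} (hP : IsCredal P) (a : Ω → ℝ) :
    ¬ dominates P a a := by
  unfold dominates
  rw [sub_self, upperExp_zero hP]
  exact lt_irrefl 0

lemma exists_maximal_above {P : Set (Ω → ℝ)} (hP : IsCredal P) (A : Finset (Ω → ℝ)) :
    ∀ a ∈ A, ∃ m, maximalIn P A m ∧ (m = a ∨ dominates P m a) := by
  classical
  have key : ∀ n : ℕ, ∀ a ∈ A, (A.filter fun x => dominates P x a).card ≤ n →
      ∃ m, maximalIn P A m ∧ (m = a ∨ dominates P m a) := by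
    intro n
    induction n with
    | zero =>
      intro a ha h0
      refine ⟨a, ⟨ha, fun a' ha' hd => ?_⟩, Or.inl rfl⟩
      have hmem : a' ∈ A.filter fun x => dominates P x a := Finset.mem_filter.mpr ⟨ha', hd⟩
      have := Finset.card_pos.mpr ⟨a', hmem⟩
      omega
    | succ n ih =>
      intro a ha h
      by_cases hmax : ∀ a' ∈ A, ¬ dominates P a' a
      · exact ⟨a, ⟨ha, hmax⟩, Or.inl rfl⟩
      · push_neg at hmax
        obtain ⟨x, hx, hxd⟩ := hmax
        have hsub : (A.filter fun y => dominates P y x) ⊆ (A.filter fun y => dominates P y a) := by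
          intro y hy
          rw [Finset.mem_filter] at hy ⊢
          exact ⟨hy.1, dominates_trans hP hy.2 hxd⟩
        have hxin : x ∈ A.filter fun y => dominates P y a := Finset.mem_filter.mpr ⟨hx, hxd⟩
        have hxout : x ∉ A.filter fun y => dominates P y x := fun hmem =>
          dominates_irrefl hP x (Finset.mem_filter.mp hmem).2
        have hlt : (A.filter fun y => dominates P y x).card <
            (A.filter fun y => dominates P y a).card :=
          Finset.card_lt_card ⟨hsub, fun hrev => hxout (hrev hxin)⟩
        obtain ⟨m, hm, hma⟩ := ih x hx (by omega)
        refine ⟨m, hm, Or.inr ?_⟩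
        rcases hma with rfl | hmx
        · exact hxd
        · exact dominates_trans hP hmx hxd
  intro a ha
  exact key _ a ha le_rfl

end Aux

theorem stmt11 {Ω : Type*} [Fintype Ω] [Nonempty Ω] [DecidableEq (Ω → ℝ)]
    (P : Set (Ω → ℝ)) (hP : IsCredal P)
    (A : Finset (Ω → ℝ)) (hA : A.Nonempty) (k : ℕ)
    (S : Finset (Ω → ℝ)) (hS : S.Nonempty) (hSA : S ⊆ A) (hScard : S.card = k)
    (hSne : S ≠ A) :
    ∃ T : Finset (Ω → ℝ), T ⊆ A ∧ T.card = k ∧ (∃ a ∈ T, maximalIn P A a) ∧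
      MmL P T A ≤ MmL P S A := by
  classical
  by_cases hmax : ∃ a ∈ S, maximalIn P A a
  · exact ⟨S, hSA, hScard, hmax, le_refl _⟩
  push_neg at hmax
  obtain ⟨a₀, ha₀⟩ := hS
  obtain ⟨m, hmmax, hm⟩ := exists_maximal_above hP A a₀ (hSA ha₀)
  have hdom : dominates P m a₀ := by
    rcases hm with rfl | h
    · exact absurd hmmax (hmax m ha₀)
    · exact h
  have hmS : m ∉ S := fun h => hmax m h hmmax
  set T : Finset (Ω → ℝ) := insert m (S.erase a₀) with hT
  have hmT : m ∈ T := Finset.mem_insert_self _ _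
  have hTA : T ⊆ A := by
    rw [hT]
    exact Finset.insert_subset hmmax.1 (fun x hx => hSA (Finset.mem_of_mem_erase hx))
  have hTcard : T.card = k := by
    rw [hT, Finset.card_insert_of_notMem (fun h => hmS (Finset.mem_of_mem_erase h)),
      Finset.card_erase_of_mem ha₀]
    have : 1 ≤ S.card := Finset.card_pos.mpr ⟨a₀, ha₀⟩
    omega
  refine ⟨T, hTA, hTcard, ⟨m, hmT, hmmax⟩, ?_⟩
  have hd0 : upperExp P (a₀ - m) < 0 := hdom
  have hmAS : m ∈ A \ S := Finset.mem_sdiff.mpr ⟨hmmax.1, hmS⟩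
  unfold MmL
  apply Finset.sup_le
  intro a' ha'
  rw [Finset.mem_sdiff] at ha'
  obtain ⟨ha'A, ha'T⟩ := ha'
  by_cases ha'a₀ : a' = a₀
  · subst ha'a₀
    obtain ⟨b, hbS, hbeq⟩ := Finset.exists_mem_eq_inf S ⟨a', ha₀⟩
      (fun a => ((upperExp P (m - a) : ℝ) : EReal))
    have hstep : (S.inf fun a => ((upperExp P (m - a) : ℝ) : EReal)) ≤
        (A \ S).sup fun a'' => S.inf fun a => ((upperExp P (a'' - a) : ℝ) : EReal) :=
      Finset.le_sup (f := fun a'' => S.inf fun a => ((upperExp P (a'' - a) : ℝ) : EReal)) hmAS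
    by_cases hb : b = a'
    · rw [hb] at hbeq
      have hge : 0 ≤ upperExp P (m - a') := by
        have h2 := upperExp_sub_add hP m a' m
        have h1 : upperExp P (m - m) = 0 := by rw [sub_self, upperExp_zero hP]
        linarith
      have h1 : (T.inf fun a => ((upperExp P (a' - a) : ℝ) : EReal)) ≤
          ((upperExp P (a' - m) : ℝ) : EReal) := Finset.inf_le hmT
      refine le_trans h1 (le_trans ?_ (hbeq ▸ hstep))
      exact_mod_cast le_trans (le_of_lt hd0) hge
    · have hbT : b ∈ T := Finset.mem_insert_of_mem (Finset.mem_erase.mpr ⟨hb, hbS⟩)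
      have h1 : (T.inf fun a => ((upperExp P (a' - a) : ℝ) : EReal)) ≤
          ((upperExp P (a' - b) : ℝ) : EReal) := Finset.inf_le hbT
      have h2 : upperExp P (a' - b) ≤ upperExp P (m - b) := by
        have := upperExp_sub_add hP a' m b
        linarith
      refine le_trans h1 (le_trans ?_ (hbeq ▸ hstep))
      exact_mod_cast h2
  · have ha'S : a' ∉ S := by
      intro hin
      exact ha'T (Finset.mem_insert_of_mem (Finset.mem_erase.mpr ⟨ha'a₀, hin⟩))
    have ha'AS : a' ∈ A \ S := Finset.mem_sdiff.mpr ⟨ha'A, ha'S⟩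
    obtain ⟨b, hbS, hbeq⟩ := Finset.exists_mem_eq_inf S ⟨a₀, ha₀⟩
      (fun a => ((upperExp P (a' - a) : ℝ) : EReal))
    have hstep : (S.inf fun a => ((upperExp P (a' - a) : ℝ) : EReal)) ≤
        (A \ S).sup fun a'' => S.inf fun a => ((upperExp P (a'' - a) : ℝ) : EReal) :=
      Finset.le_sup (f := fun a'' => S.inf fun a => ((upperExp P (a'' - a) : ℝ) : EReal)) ha'AS
    by_cases hb : b = a₀
    · rw [hb] at hbeq
      have h1 : (T.inf fun a => ((upperExp P (a' - a) : ℝ) : EReal)) ≤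
          ((upperExp P (a' - m) : ℝ) : EReal) := Finset.inf_le hmT
      have h2 : upperExp P (a' - m) ≤ upperExp P (a' - a₀) := by
        have := upperExp_sub_add hP a' a₀ m
        linarith
      refine le_trans h1 (le_trans ?_ (hbeq ▸ hstep))
      exact_mod_cast h2
    · have hbT : b ∈ T := Finset.mem_insert_of_mem (Finset.mem_erase.mpr ⟨hb, hbS⟩)
      have h1 : (T.inf fun a => ((upperExp P (a' - a) : ℝ) : EReal)) ≤
          ((upperExp P (a' - b) : ℝ) : EReal) := Finset.inf_le hbT
      exact le_trans h1 (hbeq ▸ hstep)
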